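/- For every n ≥ 1 and complex numbers u_1,…,u_n, v_1,…,v_n ∈ ℂ such that u_i ≠ v_j for all i, j, u_i ≠ -1 for all i, and v_i ≠ 1 for all i, one has -2 · C(U;V) · C(V⊔(-1); U⊔(1)) = (-1)^n · [∏_{1≤i<j≤n}(u_i-u_j)^2(v_i-v_j)^2 / ∏_{i=1}^n∏_{j=1}^n(u_i-v_j)^2] · ∏_{i=1}^n (1+v_i)(1-u_i)/((1+u_i)(1-v_i)), where U = (u_1,…,u_n) and V = (v_1,…,v_n). (This is the identity showing that the Cauchy-determinant form of the integrand I_n equals its explicit product form.) -/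

import Mathlib

open MeasureTheory Filter

noncomputable section

/-- The left wedge contour crossing the real axis at `c`: it runs from `∞·e^{-2πi/3}`
to `∞·e^{2πi/3}` and meets the real axis at `c`. -/
def wedgeL (c : ℝ) (s : ℝ) : ℂ :=
  Complex.ofReal (c - |s| / 2) + Complex.I * Complex.ofReal (s * Real.sqrt 3 / 2)

/-- The right wedge contour crossing the real axis at `c`: the negation (as a set) of
`wedgeL (-c)`, oriented from `∞·e^{-πi/3}` to `∞·e^{πi/3}`. -/
def wedgeR (c : ℝ) (s : ℝ) : ℂ := -wedgeL (-c) (-s)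

/-- The contour `Γ_L`, crossing the real axis at `-1/2 ∈ (-1,0)`. -/
def gammaL : ℝ → ℂ := wedgeL (-1/2)

/-- The contour `Γ_R = -Γ_L`, crossing the real axis at `1/2 ∈ (0,1)`. -/
def gammaR : ℝ → ℂ := wedgeR (1/2)

/-- `f_{h,x;t}(w) = exp(-(t/3)w³ + x·w² + h·w)`. -/
def fExp (h x t : ℝ) (w : ℂ) : ℂ :=
  Complex.exp (-(t : ℂ) / 3 * w ^ 3 + (x : ℂ) * w ^ 2 + (h : ℂ) * w)

/-- `S_k(W;W') = Σ w_i^k - Σ (w'_i)^k`. -/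
def Spow {n n' : ℕ} (k : ℕ) (W : Fin n → ℂ) (W' : Fin n' → ℂ) : ℂ :=
  (∑ i, W i ^ k) - ∑ i, W' i ^ k

/-- `H(W;W') = (1/12)S₁⁴ + (1/4)S₂² - (1/3)S₁S₃`. -/
def Hfun {n n' : ℕ} (W : Fin n → ℂ) (W' : Fin n' → ℂ) : ℂ :=
  (1 / 12) * Spow 1 W W' ^ 4 + (1 / 4) * Spow 2 W W' ^ 2
    - (1 / 3) * Spow 1 W W' * Spow 3 W W'

/-- The Cauchy determinant `C(W;W') = det[1/(w_i - w'_j)]`. -/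
def CauchyDet {n : ℕ} (W W' : Fin n → ℂ) : ℂ :=
  Matrix.det (Matrix.of fun i j => 1 / (W i - W' j))

/-- The integrand `I_n(U;V)` in its explicit product form. -/
def integrandI (n : ℕ) (h x t : ℝ) (U V : Fin n → ℂ) : ℂ :=
  (-1 : ℂ) ^ n * Complex.exp (-(2 / 3 : ℂ) * (t : ℂ) + 2 * (h : ℂ)) *
    ((∏ i, ∏ j, if i < j then (U i - U j) ^ 2 * (V i - V j) ^ 2 else 1) /
      ∏ i, ∏ j, (U i - V j) ^ 2) *
    (∏ i, ((1 + V i) * (1 - U i) * fExp h x t (U i)) /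
      ((1 + U i) * (1 - V i) * fExp h x t (V i))) *
    Hfun (Fin.snoc U 1) (Fin.snoc V (-1))

/-- The integrand `Î_n(U;V) = [2/Σ(-u_i+v_i)]·I_n(U;V)`. -/
def integrandIhat (n : ℕ) (h x t : ℝ) (U V : Fin n → ℂ) : ℂ :=
  (2 / ∑ i, (-U i + V i)) * integrandI n h x t U V

/-- The `2n`-fold contour integral `∫_{Γ_L^n × Γ_R^n} F(U;V) ∏ du_i/(2πi) ∏ dv_i/(2πi)`. -/
def contourProdIntegral (n : ℕ) (F : (Fin n → ℂ) → (Fin n → ℂ) → ℂ) : ℂ :=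
  ∫ sr : (Fin n → ℝ) × (Fin n → ℝ),
    F (fun i => gammaL (sr.1 i)) (fun i => gammaR (sr.2 i)) *
      ((∏ i, deriv gammaL (sr.1 i) / (2 * Real.pi * Complex.I)) *
        ∏ i, deriv gammaR (sr.2 i) / (2 * Real.pi * Complex.I))

/-- `p(h,x;t)` as a complex series of contour integrals. -/
def pC (h x t : ℝ) : ℂ :=
  ∑' n : ℕ, (1 / (Nat.factorial (n + 1) : ℂ) ^ 2) *
    contourProdIntegral (n + 1) (integrandI (n + 1) h x t)

/-- The joint density function `p(h,x;t)`. -/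
def pFun (h x t : ℝ) : ℝ := (pC h x t).re

/-- `p̂(h,x;t)` as a complex series of contour integrals. -/
def pHatC (h x t : ℝ) : ℂ :=
  ∑' n : ℕ, (1 / (Nat.factorial (n + 1) : ℂ) ^ 2) *
    contourProdIntegral (n + 1) (integrandIhat (n + 1) h x t)

/-- The joint density function `p̂(h,x;t)`. -/
def pHatFun (h x t : ℝ) : ℝ := (pHatC h x t).re



section CauchyAux

open Finset

private lemma prodsplit {n : ℕ} (g : Fin (n+1) → Fin (n+1) → ℂ) :
    (∏ i, ∏ j, g i j) =
      (∏ i : Fin n, ∏ j : Fin n, g i.castSucc j.castSucc) *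
        ((∏ i : Fin n, g i.castSucc (Fin.last n)) *
          ((∏ j : Fin n, g (Fin.last n) j.castSucc) * g (Fin.last n) (Fin.last n))) := by
  rw [Fin.prod_univ_castSucc fun i => ∏ j, g i j]
  rw [Fin.prod_univ_castSucc fun j => g (Fin.last n) j]
  simp_rw [Fin.prod_univ_castSucc fun j => g _ j, Finset.prod_mul_distrib]
  ring

private lemma negonepow (n : ℕ) : ((-1 : ℂ)) ^ (n * n) = (-1) ^ n := by
  rcases Nat.even_or_odd n with h | h
  · rw [(h.mul_left n).neg_one_pow, h.neg_one_pow]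
  · rw [(h.mul h).neg_one_pow, h.neg_one_pow]

private lemma prodneg {n : ℕ} (f : Fin n → ℂ) : (∏ i, -f i) = (-1)^n * ∏ i, f i := by
  have h : (∏ i, -f i) = ∏ i, ((-1:ℂ) * f i) := Finset.prod_congr rfl fun i _ => by ring
  rw [h, Finset.prod_mul_distrib, Finset.prod_const, Finset.card_univ, Fintype.card_fin]

private lemma swapprod {n : ℕ} (U V : Fin n → ℂ) :
    (∏ i, ∏ j, (V i - U j)) = (-1)^n * ∏ i, ∏ j, (U i - V j) := by
  have h1 : (∏ i, ∏ j, (V i - U j)) = ∏ i : Fin n, ((-1:ℂ)^n * ∏ j, (U j - V i)) := by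
    refine Finset.prod_congr rfl fun i _ => ?_
    rw [← prodneg fun j => U j - V i]
    simp_rw [neg_sub]
  rw [h1, Finset.prod_mul_distrib, Finset.prod_const, Finset.card_univ, Fintype.card_fin,
    ← pow_mul, negonepow, Finset.prod_comm]

end CauchyAux

lemma cauchy_mul : ∀ (n : ℕ) (x y : Fin n → ℂ), (∀ i j, x i ≠ y j) →
    (∏ i, ∏ j, (x i - y j)) * (Matrix.of fun i j => (x i - y j)⁻¹).det
      = ∏ i, ∏ j, if i < j then (x j - x i) * (y i - y j) else (1:ℂ) := by
  intro n
  induction n with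
  | zero => intro x y _; simp
  | succ n ih =>
    intro x y h
    have hne : ∀ i j, x i - y j ≠ 0 := fun i j => sub_ne_zero.mpr (h i j)
    set a := x (Fin.last n) with ha
    set b := y (Fin.last n) with hb
    have hab : a - b ≠ 0 := hne _ _
    set M : Matrix (Fin (n+1)) (Fin (n+1)) ℂ := Matrix.of fun i j => (x i - y j)⁻¹ with hM
    set Ms : Matrix (Fin n) (Fin n) ℂ :=
      Matrix.of fun i j => (x i.castSucc - y j.castSucc)⁻¹ with hMs
    set B : Matrix (Fin (n+1)) (Fin (n+1)) ℂ :=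
      Matrix.of fun i j => (x i - b) * ((a - y j) * ((a - b)⁻¹ * (x i - y j)⁻¹)) with hB
    set B' : Matrix (Fin (n+1)) (Fin (n+1)) ℂ :=
      Matrix.of fun i j => if i = Fin.last n then (1:ℂ)
        else (a - x i) * ((y j - b) * ((a - b)⁻¹ * (x i - y j)⁻¹)) with hB'
    -- det B in terms of det M
    have hdB : B.det = (∏ i, (x i - b)) * ((∏ j, (a - y j)) * (((a - b)⁻¹) ^ (n+1) * M.det)) := by
      rw [hB, Matrix.det_mul_column (fun i => x i - b) (fun i j => (a - y j) * ((a - b)⁻¹ * (x i - y j)⁻¹))]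
      have : (Matrix.of fun i j => (a - y j) * ((a - b)⁻¹ * (x i - y j)⁻¹)).det
          = (∏ j, (a - y j)) * (((a - b)⁻¹) ^ (n+1) * M.det) := by
        rw [Matrix.det_mul_row (fun j => a - y j) (fun i j => (a - b)⁻¹ * (x i - y j)⁻¹)]
        congr 1
        have h4 : (Matrix.det fun i j : Fin (n+1) => (a - b)⁻¹ * (x i - y j)⁻¹)
            = (Matrix.of fun i j : Fin (n+1) => (a - b)⁻¹ * M i j).det := rfl
        rw [h4, Matrix.det_mul_column (fun _ => (a - b)⁻¹) M]
        simp
      rw [← this]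
      rfl
    -- det B = det B'
    have hBB' : B.det = B'.det := by
      apply Matrix.det_eq_of_forall_row_eq_smul_add_const
        (fun i => if i = Fin.last n then (0:ℂ) else 1) (Fin.last n) (by simp)
      intro i j
      by_cases hi : i = Fin.last n
      · subst hi
        simp only [hB, hB', Matrix.of_apply, if_pos rfl, if_pos rfl, ↓reduceIte]
        rw [← ha]
        have h5 : a - y j ≠ 0 := hne (Fin.last n) j
        field_simp
        norm_num
      · simp only [hB, hB', Matrix.of_apply, if_neg hi, if_pos rfl, ↓reduceIte]
        have h1 := hne i j
        field_simp
        ring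
    -- det B' by expansion along last column
    have hdB' : B'.det = (∏ i : Fin n, (a - x i.castSucc)) *
        ((∏ j : Fin n, (y j.castSucc - b)) * (((a - b)⁻¹) ^ n * Ms.det)) := by
      rw [Matrix.det_succ_column B' (Fin.last n)]
      have hzero : ∀ i : Fin (n+1), i ≠ Fin.last n → B' i (Fin.last n) = 0 := by
        intro i hi
        simp [hB', hi, ← hb]
      rw [Finset.sum_eq_single (Fin.last n)]
      · have h1 : B' (Fin.last n) (Fin.last n) = 1 := by simp [hB']
        rw [h1]
        have h2 : ((-1 : ℂ)) ^ ((Fin.last n : ℕ) + (Fin.last n : ℕ)) = 1 := by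
          simp [← two_mul, pow_mul]
        simp only [h2, one_mul, mul_one]
        have h3 : B'.submatrix (Fin.last n).succAbove (Fin.last n).succAbove
            = Matrix.of fun i j : Fin n => (a - x i.castSucc) *
              ((y j.castSucc - b) * ((a - b)⁻¹ * (x i.castSucc - y j.castSucc)⁻¹)) := by
          ext i j
          simp [hB', Fin.succAbove_last, (Fin.castSucc_lt_last i).ne]
        rw [h3, Matrix.det_mul_column (fun i : Fin n => a - x i.castSucc)
          (fun i j : Fin n => (y j.castSucc - b) * ((a - b)⁻¹ * (x i.castSucc - y j.castSucc)⁻¹))]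
        congr 1
        have h5 : (Matrix.det fun i j : Fin n => (y j.castSucc - b) * ((a - b)⁻¹ * (x i.castSucc - y j.castSucc)⁻¹))
            = (Matrix.of fun i j : Fin n => (y j.castSucc - b) * ((a - b)⁻¹ * (x i.castSucc - y j.castSucc)⁻¹)).det := rfl
        rw [h5, Matrix.det_mul_row (fun j : Fin n => y j.castSucc - b)
          (fun i j : Fin n => (a - b)⁻¹ * (x i.castSucc - y j.castSucc)⁻¹)]
        congr 1
        have h4 : (Matrix.det fun i j : Fin n => (a - b)⁻¹ * (x i.castSucc - y j.castSucc)⁻¹)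
            = (Matrix.of fun i j : Fin n => (a - b)⁻¹ * Ms i j).det := rfl
        rw [h4, Matrix.det_mul_column (fun _ => (a - b)⁻¹) Ms]
        simp
      · intro i _ hi
        rw [hzero i hi]; ring
      · simp
    -- assemble
    set R1 := ∏ i : Fin n, (x i.castSucc - b) with hR1
    set R2 := ∏ j : Fin n, (a - y j.castSucc) with hR2
    set Q1 := ∏ i : Fin n, (a - x i.castSucc) with hQ1
    set Q2 := ∏ j : Fin n, (y j.castSucc - b) with hQ2
    have hsplit1 : (∏ i : Fin (n+1), (x i - b)) = R1 * (a - b) := by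
      rw [Fin.prod_univ_castSucc fun i => x i - b, ← ha]
    have hsplit2 : (∏ j : Fin (n+1), (a - y j)) = R2 * (a - b) := by
      rw [Fin.prod_univ_castSucc fun j => a - y j, ← hb]
    have hc := hdB.symm.trans (hBB'.trans hdB')
    rw [hsplit1, hsplit2] at hc
    have hE : R1 * R2 * ((a - b) * M.det) = Q1 * (Q2 * Ms.det) := by
      apply mul_right_cancel₀ (pow_ne_zero (n+1) hab)
      have hk1 : ((a - b)⁻¹ * (a - b)) ^ (n+1) = 1 := by rw [inv_mul_cancel₀ hab, one_pow]
      have hk2 : ((a - b)⁻¹ * (a - b)) ^ n = 1 := by rw [inv_mul_cancel₀ hab, one_pow]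
      generalize a - b = c at hc hk1 hk2 ⊢
      linear_combination c ^ (2*n+1) * hc - R1 * R2 * M.det * c ^ (n+2) * hk1
        + Q1 * Q2 * Ms.det * c ^ (n+1) * hk2
    have hIH := ih (fun i => x i.castSucc) (fun j => y j.castSucc) (fun i j => h _ _)
    rw [prodsplit (fun i j => x i - y j),
      prodsplit (fun i j => if i < j then (x j - x i) * (y i - y j) else (1:ℂ))]
    have e1 : (∏ i : Fin n, (x i.castSucc - y (Fin.last n))) = R1 := by rw [hR1, hb]
    have e2 : (∏ j : Fin n, (x (Fin.last n) - y j.castSucc)) = R2 := by rw [hR2, ha]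
    have e3 : (∏ i : Fin n, (if i.castSucc < Fin.last n then
        (x (Fin.last n) - x i.castSucc) * (y i.castSucc - y (Fin.last n)) else (1:ℂ)))
        = Q1 * Q2 := by
      rw [hQ1, hQ2, ← Finset.prod_mul_distrib]
      refine Finset.prod_congr rfl fun i _ => ?_
      rw [if_pos (Fin.castSucc_lt_last i), ← ha, ← hb]
    have e4 : (∏ j : Fin n, (if Fin.last n < j.castSucc then
        (x j.castSucc - x (Fin.last n)) * (y (Fin.last n) - y j.castSucc) else (1:ℂ))) = 1 := by
      apply Finset.prod_eq_one
      intro j _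
      rw [if_neg (not_lt_of_gt (Fin.castSucc_lt_last j))]
    have e5 : (∏ i : Fin n, ∏ j : Fin n, (if i.castSucc < j.castSucc then
        (x j.castSucc - x i.castSucc) * (y i.castSucc - y j.castSucc) else (1:ℂ)))
        = ∏ i : Fin n, ∏ j : Fin n, (if i < j then
        (x j.castSucc - x i.castSucc) * (y i.castSucc - y j.castSucc) else (1:ℂ)) := by
      refine Finset.prod_congr rfl fun i _ => Finset.prod_congr rfl fun j _ => ?_
      simp only [Fin.castSucc_lt_castSucc_iff]
    rw [e1, e2, e3, e4, e5, if_neg (lt_irrefl _)]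
    have hM' : (x (Fin.last n) - y (Fin.last n)) = a - b := by rw [← ha, ← hb]
    rw [hM']
    linear_combination (∏ i : Fin n, ∏ j : Fin n, (x i.castSucc - y j.castSucc)) * hE
      + Q1 * Q2 * hIH

private lemma cauchy_det_eq {n : ℕ} (x y : Fin n → ℂ) (h : ∀ i j, x i ≠ y j) :
    (∏ i, ∏ j, (x i - y j)) * CauchyDet x y
      = ∏ i, ∏ j, if i < j then (x j - x i) * (y i - y j) else (1:ℂ) := by
  unfold CauchyDet
  simp_rw [one_div]
  exact cauchy_mul _ x y h


/-- The Cauchy-determinant form of the integrand equals its explicit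
product form: `-2·C(U;V)·C(V⊔(-1);U⊔(1)) = (-1)^n·[∏(u_i-u_j)²(v_i-v_j)²/∏∏(u_i-v_j)²]·
∏(1+v_i)(1-u_i)/((1+u_i)(1-v_i))`. -/
theorem cauchy_det_product_form (n : ℕ) (hn : 1 ≤ n) (U V : Fin n → ℂ)
    (hUV : ∀ i j, U i ≠ V j) (hU : ∀ i, U i ≠ -1) (hV : ∀ i, V i ≠ 1) :
    -2 * CauchyDet U V * CauchyDet (Fin.snoc V (-1)) (Fin.snoc U 1) =
      (-1 : ℂ) ^ n *
        ((∏ i, ∏ j, if i < j then (U i - U j) ^ 2 * (V i - V j) ^ 2 else 1) /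
          ∏ i, ∏ j, (U i - V j) ^ 2) *
        ∏ i, ((1 + V i) * (1 - U i)) / ((1 + U i) * (1 - V i)) := by

  classical
  have hUVs : ∀ i j, U i - V j ≠ 0 := fun i j => sub_ne_zero.mpr (hUV i j)
  have hQ0 : (∏ i, ∏ j, (U i - V j)) ≠ 0 :=
    Finset.prod_ne_zero_iff.mpr fun i _ => Finset.prod_ne_zero_iff.mpr fun j _ => hUVs i j
  have hXY : ∀ (i j : Fin (n+1)),
      (Fin.snoc V (-1) : Fin (n+1) → ℂ) i ≠ (Fin.snoc U 1 : Fin (n+1) → ℂ) j := by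
    intro i j
    induction i using Fin.lastCases with
    | last =>
      induction j using Fin.lastCases with
      | last => simp only [Fin.snoc_last]; norm_num
      | cast j => simp only [Fin.snoc_last, Fin.snoc_castSucc]; exact fun hc => hU j hc.symm
    | cast i =>
      induction j using Fin.lastCases with
      | last => simp only [Fin.snoc_last, Fin.snoc_castSucc]; exact hV i
      | cast j => simp only [Fin.snoc_castSucc]; exact fun hc => hUV j i hc.symm
  have hQ'0 : (∏ i : Fin (n+1), ∏ j : Fin (n+1),
      ((Fin.snoc V (-1) : Fin (n+1) → ℂ) i - (Fin.snoc U 1 : Fin (n+1) → ℂ) j)) ≠ 0 :=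
    Finset.prod_ne_zero_iff.mpr fun i _ => Finset.prod_ne_zero_iff.mpr fun j _ =>
      sub_ne_zero.mpr (hXY i j)
  have hC1 : CauchyDet U V
      = (∏ i, ∏ j, if i < j then (U j - U i) * (V i - V j) else (1:ℂ))
        / (∏ i, ∏ j, (U i - V j)) := by
    rw [eq_div_iff hQ0]
    linear_combination cauchy_det_eq U V hUV
  have hC2 : CauchyDet (Fin.snoc V (-1) : Fin (n+1) → ℂ) (Fin.snoc U 1 : Fin (n+1) → ℂ)
      = (∏ i : Fin (n+1), ∏ j : Fin (n+1), if i < j then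
          ((Fin.snoc V (-1) : Fin (n+1) → ℂ) j - (Fin.snoc V (-1) : Fin (n+1) → ℂ) i) *
            ((Fin.snoc U 1 : Fin (n+1) → ℂ) i - (Fin.snoc U 1 : Fin (n+1) → ℂ) j) else (1:ℂ))
        / (∏ i : Fin (n+1), ∏ j : Fin (n+1),
            ((Fin.snoc V (-1) : Fin (n+1) → ℂ) i - (Fin.snoc U 1 : Fin (n+1) → ℂ) j)) := by
    rw [eq_div_iff hQ'0]
    linear_combination cauchy_det_eq _ _ hXY
  have hQ'eq : (∏ i : Fin (n+1), ∏ j : Fin (n+1),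
      ((Fin.snoc V (-1) : Fin (n+1) → ℂ) i - (Fin.snoc U 1 : Fin (n+1) → ℂ) j))
      = ((-1:ℂ)^n * ∏ i, ∏ j, (U i - V j)) *
          ((((-1:ℂ)^n * ∏ i, (1 - V i))) * ((((-1:ℂ)^n * ∏ j, (1 + U j))) * (-1 - 1))) := by
    rw [prodsplit (fun i j => (Fin.snoc V (-1) : Fin (n+1) → ℂ) i
      - (Fin.snoc U 1 : Fin (n+1) → ℂ) j)]
    simp only [Fin.snoc_castSucc, Fin.snoc_last]
    rw [swapprod U V]
    congr 1
    congr 1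
    · have h : (∏ i, (V i - 1)) = ∏ i : Fin n, -(1 - V i) :=
        Finset.prod_congr rfl fun i _ => by ring
      rw [h, prodneg]
    congr 1
    · have h : (∏ j, (-1 - U j)) = ∏ j : Fin n, -(1 + U j) :=
        Finset.prod_congr rfl fun j _ => by ring
      rw [h, prodneg]
  have hA'eq : (∏ i : Fin (n+1), ∏ j : Fin (n+1), if i < j then
          ((Fin.snoc V (-1) : Fin (n+1) → ℂ) j - (Fin.snoc V (-1) : Fin (n+1) → ℂ) i) *
            ((Fin.snoc U 1 : Fin (n+1) → ℂ) i - (Fin.snoc U 1 : Fin (n+1) → ℂ) j) else (1:ℂ))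
      = (∏ i, ∏ j, if i < j then (V j - V i) * (U i - U j) else (1:ℂ)) *
          ∏ i, ((1 + V i) * (1 - U i)) := by
    rw [prodsplit (fun i j => if i < j then
          ((Fin.snoc V (-1) : Fin (n+1) → ℂ) j - (Fin.snoc V (-1) : Fin (n+1) → ℂ) i) *
            ((Fin.snoc U 1 : Fin (n+1) → ℂ) i - (Fin.snoc U 1 : Fin (n+1) → ℂ) j) else (1:ℂ))]
    simp only [Fin.snoc_castSucc, Fin.snoc_last]
    have e3 : (∏ i : Fin n, if i.castSucc < Fin.last n then
        ((-1 : ℂ) - V i) * (U i - 1) else (1:ℂ)) = ∏ i, ((1 + V i) * (1 - U i)) :=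
      Finset.prod_congr rfl fun i _ => by rw [if_pos (Fin.castSucc_lt_last i)]; ring
    have e4 : (∏ j : Fin n, if Fin.last n < j.castSucc then
        (V j - (-1 : ℂ)) * (1 - U j) else (1:ℂ)) = 1 :=
      Finset.prod_eq_one fun j _ => if_neg (not_lt_of_gt (Fin.castSucc_lt_last j))
    have e5 : (∏ i : Fin n, ∏ j : Fin n, if i.castSucc < j.castSucc then
        (V j - V i) * (U i - U j) else (1:ℂ))
        = ∏ i, ∏ j, if i < j then (V j - V i) * (U i - U j) else (1:ℂ) := by
      refine Finset.prod_congr rfl fun i _ => Finset.prod_congr rfl fun j _ => ?_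
      simp only [Fin.castSucc_lt_castSucc_iff]
    rw [e3, e4, e5, if_neg (lt_irrefl _)]
    ring
  have hAmix : (∏ i, ∏ j, if i < j then (U j - U i) * (V i - V j) else (1:ℂ)) *
      (∏ i, ∏ j, if i < j then (V j - V i) * (U i - U j) else (1:ℂ))
      = ∏ i, ∏ j, if i < j then (U i - U j)^2 * (V i - V j)^2 else (1:ℂ) := by
    rw [← Finset.prod_mul_distrib]
    refine Finset.prod_congr rfl fun i _ => ?_
    rw [← Finset.prod_mul_distrib]
    refine Finset.prod_congr rfl fun j _ => ?_
    split_ifs with h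
    · ring
    · ring
  have hq2 : (∏ i, ∏ j, (U i - V j)^2) = (∏ i, ∏ j, (U i - V j))^2 := by
    have h : ∀ i, (∏ j, (U i - V j)^2) = (∏ j, (U i - V j))^2 :=
      fun i => by rw [Finset.prod_pow]
    simp_rw [h, Finset.prod_pow]
  have hp1 : (∏ i, ((1:ℂ) - V i)) ≠ 0 :=
    Finset.prod_ne_zero_iff.mpr fun i _ => sub_ne_zero.mpr (Ne.symm (hV i))
  have hp2 : (∏ i, ((1:ℂ) + U i)) ≠ 0 :=
    Finset.prod_ne_zero_iff.mpr fun i _ => fun hc => hU i (by linear_combination hc)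
  rw [hC1, hC2, hQ'eq, hA'eq, Finset.prod_div_distrib,
    (Finset.prod_mul_distrib : (∏ i, ((1 + U i) * (1 - V i))) = _), hq2, ← hAmix]
  set a1 := ∏ i, ∏ j, if i < j then (U j - U i) * (V i - V j) else (1:ℂ) with ha1
  set a2 := ∏ i, ∏ j, if i < j then (V j - V i) * (U i - U j) else (1:ℂ) with ha2
  set q := ∏ i, ∏ j, (U i - V j) with hq
  set p1 := ∏ i, ((1:ℂ) - V i) with hpp1
  set p2 := ∏ i, ((1:ℂ) + U i) with hpp2
  set pn := ∏ i, (((1:ℂ) + V i) * (1 - U i)) with hppn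
  have key : q ^ 2 * p2 * p1 * (q⁻¹ ^ 2 * (p2⁻¹ * p1⁻¹)) = 1 := by
    rw [inv_pow]
    field_simp
  rcases Nat.even_or_odd n with hpar | hpar
  · rw [hpar.neg_one_pow]
    field_simp
    ring
  · rw [hpar.neg_one_pow]
    field_simp
    ring


end
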